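/- Let 𝔫 be a finite-dimensional real Lie algebra of compact type of dimension n ≥ 3. Then the Weyl operator vanishes identically, i.e. W(a,b)x = 0 for all a,b,x ∈ 𝔫, if and only if 𝔫 is isomorphic as a real Lie algebra to 𝔰𝔲(2), equivalently to ℝ³ equipped with the cross-product bracket. (The normal conformal Cartan connection of the bi-invariant metric is flat if and only if 𝔫 ≅ 𝔰𝔲(2).) -/

import Mathlib

set_option maxHeartbeats 1000000

open LinearMap Module in
private lemma weyl_trace_rankOne {M : Type*} [AddCommGroup M] [Module ℝ M] [Module.Finite ℝ M]
    (f : M →ₗ[ℝ] ℝ) (m : M) : trace ℝ M (f.smulRight m) = f m := by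
  have h : f.smulRight m = dualTensorHom ℝ M M (f ⊗ₜ[ℝ] m) := by ext x; simp
  rw [h, trace_eq_contract_apply, contractLeft_apply]

open LinearMap in
private lemma weyl_cross_trace (u v : Fin 3 → ℝ) :
    trace ℝ (Fin 3 → ℝ) (crossProduct u ∘ₗ crossProduct v)
      = -2 * (u 0 * v 0 + u 1 * v 1 + u 2 * v 2) := by
  rw [trace_eq_matrix_trace ℝ (Pi.basisFun ℝ (Fin 3))]
  simp [Matrix.trace, LinearMap.toMatrix_apply, cross_apply, Fin.sum_univ_three]
  ring

private lemma weyl_cross_key (u v w : Fin 3 → ℝ) :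
    (-(1/4:ℝ)) • (crossProduct (crossProduct u v) w)
      + (1/(4*((3:ℝ)-1))) • ((2*(u 0*w 0+u 1*w 1+u 2*w 2)) • v
          - (2*(v 0*w 0+v 1*w 1+v 2*w 2)) • u) = 0 := by
  funext i
  fin_cases i <;> (simp [cross_apply]; ring)

open LinearMap Module in
private lemma weyl_build_w (𝔫 : Type*) [LieRing 𝔫] [LieAlgebra ℝ 𝔫] [Module.Finite ℝ 𝔫]
    (K : LinearMap.BilinForm ℝ 𝔫) (a b x : 𝔫)
    (haa : K a a = -1) (hbb : K b b = -1) (hab : K a b = 0) (hba : K b a = 0)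
    (hax : K a x = 0) (hbx : K b x = 0) (hxa' : K x a = 0) (hxb' : K x b = 0)
    (hxx : K x x = -(1/2))
    (hxdef : x = ⁅a, b⁆)
    (hxa2 : (2:ℝ) • ⁅x,a⁆ = b) (hbx2 : (2:ℝ) • ⁅b,x⁆ = a) :
    ∃ w : Fin 3 → 𝔫, LinearIndependent ℝ w ∧
      ⁅w 0, w 1⁆ = w 2 ∧ ⁅w 1, w 2⁆ = w 0 ∧ ⁅w 2, w 0⁆ = w 1 := by
  obtain ⟨s, hs0, hss⟩ : ∃ s : ℝ, 0 < s ∧ s * s = 2 :=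
    ⟨Real.sqrt 2, Real.sqrt_pos.mpr (by norm_num), Real.mul_self_sqrt (by norm_num)⟩
  refine ⟨![s • a, s • b, (2:ℝ) • x], ?_, ?_, ?_, ?_⟩
  · rw [Fintype.linearIndependent_iff]
    intro g hg
    rw [Fin.sum_univ_three] at hg
    simp only [Matrix.cons_val_zero, Matrix.cons_val_one, Matrix.head_cons,
      Matrix.cons_val_two, Matrix.tail_cons] at hg
    have h0 := congrArg (fun z => K (s • a) z) hg
    have h1 := congrArg (fun z => K (s • b) z) hg
    have h2 := congrArg (fun z => K ((2:ℝ) • x) z) hg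
    simp only [map_add, map_smul, LinearMap.smul_apply, smul_eq_mul, map_zero] at h0 h1 h2
    rw [haa, hab, hax] at h0
    rw [hba, hbb, hbx] at h1
    rw [hxa', hxb', hxx] at h2
    intro i
    fin_cases i
    · show g 0 = 0
      linear_combination (-(1/2 : ℝ)) * h0 - (g 0 / 2) * hss
    · show g 1 = 0
      linear_combination (-(1/2 : ℝ)) * h1 - (g 1 / 2) * hss
    · show g 2 = 0
      linear_combination (-(1/2 : ℝ)) * h2
  · show ⁅s • a, s • b⁆ = (2:ℝ) • x
    rw [smul_lie, lie_smul, smul_smul, hss, ← hxdef]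
  · show ⁅s • b, (2:ℝ) • x⁆ = s • a
    rw [smul_lie, lie_smul, hbx2]
  · show ⁅(2:ℝ) • x, s • a⁆ = s • b
    rw [smul_lie, lie_smul, smul_comm (2:ℝ) s, hxa2]

open LinearMap Module in
private lemma weyl_build_equiv (𝔫 : Type*) [LieRing 𝔫] [LieAlgebra ℝ 𝔫] [Module.Finite ℝ 𝔫]
    (hfin : Module.finrank ℝ 𝔫 = 3)
    (w : Fin 3 → 𝔫) (hli : LinearIndependent ℝ w)
    (h01 : ⁅w 0, w 1⁆ = w 2) (h12 : ⁅w 1, w 2⁆ = w 0) (h20 : ⁅w 2, w 0⁆ = w 1) :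
    ∃ e : 𝔫 ≃ₗ[ℝ] (Fin 3 → ℝ), ∀ x y : 𝔫, e ⁅x, y⁆ = crossProduct (e x) (e y) := by
  have hcard : Fintype.card (Fin 3) = finrank ℝ 𝔫 := by rw [hfin]; simp
  let bas : Basis (Fin 3) ℝ 𝔫 := basisOfLinearIndependentOfCardEqFinrank hli hcard
  have hbas : ∀ i, bas i = w i := fun i => by
    rw [coe_basisOfLinearIndependentOfCardEqFinrank]
  have hb01 : ⁅bas 0, bas 1⁆ = bas 2 := by rw [hbas, hbas, hbas]; exact h01
  have hb12 : ⁅bas 1, bas 2⁆ = bas 0 := by rw [hbas, hbas, hbas]; exact h12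
  have hb20 : ⁅bas 2, bas 0⁆ = bas 1 := by rw [hbas, hbas, hbas]; exact h20
  have hb10 : ⁅bas 1, bas 0⁆ = -bas 2 := by rw [← lie_skew, hb01]
  have hb21 : ⁅bas 2, bas 1⁆ = -bas 0 := by rw [← lie_skew, hb12]
  have hb02 : ⁅bas 0, bas 2⁆ = -bas 1 := by rw [← lie_skew, hb20]
  refine ⟨bas.equivFun, ?_⟩
  have hL : (LinearMap.mk₂ ℝ (fun p q : 𝔫 => bas.equivFun ⁅p,q⁆)
        (fun m n p => by simp only [add_lie, map_add])
        (fun c m p => by simp only [smul_lie, map_smul])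
        (fun m p q => by simp only [lie_add, map_add])
        (fun c m p => by simp only [lie_smul, map_smul]))
      = (LinearMap.mk₂ ℝ (fun p q : 𝔫 => crossProduct (bas.equivFun p) (bas.equivFun q))
        (fun m n p => by simp only [map_add, LinearMap.add_apply])
        (fun c m p => by simp only [map_smul, LinearMap.smul_apply])
        (fun m p q => by simp only [map_add])
        (fun c m p => by simp only [map_smul])) := by
    apply ext_basis bas bas
    intro i j
    simp only [mk₂_apply]
    fin_cases i <;> fin_cases j <;>
      · funext k
        fin_cases k <;>
          simp [hb01, hb12, hb20, hb10, hb21, hb02, lie_self, cross_apply,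
            Basis.equivFun_self, Pi.neg_apply, Pi.zero_apply]
  intro p q
  have := LinearMap.congr_fun (LinearMap.congr_fun hL p) q
  simpa using this

/-- Let `𝔫` be a finite-dimensional real Lie algebra of compact type of
dimension `n ≥ 3`.  The Weyl operator
`W(a,b)x := -(1/4) • ⁅⁅a,b⁆,x⁆ + (1/(4(n-1))) • (⟨a,x⟩ • b - ⟨b,x⟩ • a)` (with
`⟨x,y⟩ = -B x y`) of the bi-invariant metric vanishes identically if and only if `𝔫` is
isomorphic as a real Lie algebra to `𝔰𝔲(2)`, equivalently to `ℝ³` with the cross-product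
bracket. -/
theorem weyl_operator_vanishes_iff_su2
    (𝔫 : Type*) [LieRing 𝔫] [LieAlgebra ℝ 𝔫] [Module.Finite ℝ 𝔫]
    (hB : ∀ x : 𝔫, x ≠ 0 → killingForm ℝ 𝔫 x x < 0)
    (hn : 3 ≤ Module.finrank ℝ 𝔫) :
    (∀ a b x : 𝔫,
        (-(1 / 4 : ℝ)) • ⁅⁅a, b⁆, x⁆
          + (1 / (4 * ((Module.finrank ℝ 𝔫 : ℝ) - 1))) •
              ((-killingForm ℝ 𝔫 a x) • b - (-killingForm ℝ 𝔫 b x) • a) = 0)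
      ↔ ∃ e : 𝔫 ≃ₗ[ℝ] (Fin 3 → ℝ), ∀ x y : 𝔫, e ⁅x, y⁆ = crossProduct (e x) (e y) := by
  open LinearMap Module in
  constructor
  · -- forward direction
    intro h
    set K := killingForm ℝ 𝔫 with hKdef
    set N : ℝ := (Module.finrank ℝ 𝔫 : ℝ) with hNdef
    have hN3 : (3:ℝ) ≤ N := by rw [hNdef]; exact_mod_cast hn
    have hNe : N - 1 ≠ 0 := by linarith
    have hsymm : ∀ p q : 𝔫, K p q = K q p := fun p q => LieModule.traceForm_comm ℝ 𝔫 𝔫 p q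
    have hinv : ∀ p q r : 𝔫, K ⁅p,q⁆ r = K p ⁅q,r⁆ :=
      fun p q r => LieModule.traceForm_apply_lie_apply ℝ 𝔫 𝔫 p q r
    have key : ∀ p q r : 𝔫, (N-1) • ⁅⁅p,q⁆,r⁆ = (-K p r) • q - (-K q r) • p := by
      intro p q r
      have h0 := h p q r
      have h1 := congrArg (fun z => (4*(N-1)) • z) h0
      simp only [smul_add, smul_smul, smul_zero] at h1
      rw [show (4*(N-1)) * (-(1/4)) = -(N-1) by ring,
        show (4*(N-1)) * (1/(4*(N-1))) = 1 by field_simp] at h1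
      rw [one_smul, neg_smul, neg_add_eq_zero] at h1
      exact h1
    have hnorm : ∀ v : 𝔫, v ≠ 0 → ∃ w : 𝔫, K w w = -1 ∧ ∃ t : ℝ, 0 < t ∧ w = t • v := by
      intro v hv
      have hs : (0:ℝ) < -(K v v) := by have := hB v hv; linarith
      refine ⟨(Real.sqrt (-(K v v)))⁻¹ • v, ?_, _, inv_pos.mpr (Real.sqrt_pos.mpr hs), rfl⟩
      have h2 : Real.sqrt (-(K v v)) ^ 2 = -(K v v) := Real.sq_sqrt hs.le
      have hne : K v v ≠ 0 := ne_of_lt (hB v hv)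
      rw [map_smul, map_smul, LinearMap.smul_apply]
      rw [smul_eq_mul, smul_eq_mul, ← mul_assoc, ← pow_two, inv_pow, h2]
      field_simp
    have : Nontrivial 𝔫 := Module.nontrivial_of_finrank_pos (R := ℝ) (by omega)
    obtain ⟨a0, ha0⟩ := exists_ne (0 : 𝔫)
    obtain ⟨a, haa, -⟩ := hnorm a0 ha0
    have ha : a ≠ 0 := by
      intro h'; rw [h'] at haa; simp at haa
    obtain ⟨b, hbb, hab⟩ : ∃ b : 𝔫, K b b = -1 ∧ K a b = 0 := by
      obtain ⟨b0, hb0⟩ : ∃ b0 : 𝔫, b0 ∉ Submodule.span ℝ {a} := by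
        by_contra h'
        push_neg at h'
        have htop : Submodule.span ℝ {a} = ⊤ := by rw [Submodule.eq_top_iff']; exact h'
        have h1 : finrank ℝ (Submodule.span ℝ {a}) = 1 := finrank_span_singleton ha
        rw [htop, finrank_top] at h1
        omega
      have hb1ne : b0 + (K a b0) • a ≠ 0 := by
        intro h'
        apply hb0
        have hb0eq : b0 = -(K a b0) • a := by
          rw [neg_smul, eq_neg_iff_add_eq_zero]; exact h'
        rw [hb0eq]
        exact Submodule.smul_mem _ _ (Submodule.mem_span_singleton_self a)
      have hab1 : K a (b0 + (K a b0) • a) = 0 := by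
        rw [map_add, map_smul, smul_eq_mul, haa]; ring
      obtain ⟨b, hbbv, t, ht, hbt⟩ := hnorm _ hb1ne
      refine ⟨b, hbbv, ?_⟩
      rw [hbt, map_smul, smul_eq_mul, hab1, mul_zero]
    have hba : K b a = 0 := by rw [hsymm b a]; exact hab
    obtain ⟨x, hxdef⟩ : ∃ x : 𝔫, x = ⁅a, b⁆ := ⟨_, rfl⟩
    have hxa : (N-1) • ⁅x,a⁆ = b := by
      have hk := key a b a
      rw [haa, hba, ← hxdef] at hk
      rw [hk]; module
    have hxb : (N-1) • ⁅x,b⁆ = -a := by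
      have hk := key a b b
      rw [hab, hbb, ← hxdef] at hk
      rw [hk]; module
    have hbxa : (N-1) • ⁅b,x⁆ = a := by
      have hskew : -⁅x, b⁆ = ⁅b, x⁆ := lie_skew b x
      rw [← hskew, smul_neg, hxb, neg_neg]
    have e1 : (N-1) * K x x = -1 := by
      have h2 : K x x = K a ⁅b,x⁆ := by rw [hxdef]; exact hinv a b ⁅a,b⁆
      calc (N-1) * K x x = (N-1) * K a ⁅b,x⁆ := by rw [h2]
        _ = K a ((N-1) • ⁅b,x⁆) := by rw [map_smul, smul_eq_mul]
        _ = -1 := by rw [hbxa, haa]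
    have hop : ((N-1)^2) • ((LieAlgebra.ad ℝ 𝔫 x : 𝔫 →ₗ[ℝ] 𝔫) ∘ₗ (LieAlgebra.ad ℝ 𝔫 x : 𝔫 →ₗ[ℝ] 𝔫))
        = (K a).smulRight a + (K b).smulRight b := by
      ext y
      simp only [LinearMap.smul_apply, coe_comp, Function.comp_apply, LieAlgebra.ad_apply,
        LinearMap.add_apply, smulRight_apply]
      have h1 : (N-1) • ⁅x,y⁆ = (-K a y) • b - (-K b y) • a := by
        rw [hxdef]; exact key a b y
      calc ((N-1)^2) • ⁅x,⁅x,y⁆⁆ = (N-1) • ⁅x, (N-1) • ⁅x,y⁆⁆ := by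
            rw [lie_smul, smul_smul, sq]
        _ = (N-1) • ⁅x, (-K a y) • b - (-K b y) • a⁆ := by rw [h1]
        _ = (-K a y) • ((N-1) • ⁅x,b⁆) - (-K b y) • ((N-1) • ⁅x,a⁆) := by
            rw [lie_sub, lie_smul, lie_smul]; module
        _ = (K a y) • a + (K b y) • b := by rw [hxb, hxa]; module
    have e2 : (N-1)^2 * K x x = -2 := by
      have htr := congrArg (LinearMap.trace ℝ 𝔫) hop
      simp only [map_smul, map_add, smul_eq_mul] at htr
      rw [weyl_trace_rankOne, weyl_trace_rankOne, haa, hbb] at htr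
      rw [← killingForm_apply_apply, ← hKdef] at htr
      linarith [htr]
    have hNeq : N = 3 := by
      have h4 : (N-1) * ((N-1) * K x x) = (N-1) * (-1) := by rw [e1]
      have h5 : (N-1) * ((N-1) * K x x) = -2 := by rw [← e2]; ring
      nlinarith [h4.symm.trans h5]
    have hfin : Module.finrank ℝ 𝔫 = 3 := by
      have h3 : ((3:ℕ) : ℝ) = N := by rw [hNeq]; norm_num
      rw [hNdef] at h3
      exact_mod_cast h3.symm
    have hN1 : N - 1 = 2 := by rw [hNeq]; norm_num
    rw [hN1] at hxa hxb hbxa e1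
    -- remaining orthogonality facts
    have hxa' : K x a = 0 := by
      have h1 : K x a = K a ⁅b,a⁆ := by rw [hxdef]; exact hinv a b a
      have h2 : (⁅b,a⁆ : 𝔫) = -x := by rw [hxdef]; exact (lie_skew b a).symm
      have h3 : K x a = -K a x := by rw [h1, h2, map_neg]
      have h4 : K a x = K x a := hsymm a x
      linarith [h3, h4]
    have hax : K a x = 0 := by rw [hsymm a x]; exact hxa'
    have hxb'' : K x b = 0 := by
      have h1 : K x b = K a ⁅b,b⁆ := by rw [hxdef]; exact hinv a b b
      rw [h1, lie_self, map_zero]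
    have hbx' : K b x = 0 := by rw [hsymm b x]; exact hxb''
    have hxx : K x x = -(1/2) := by linarith [e1]
    obtain ⟨w, hli, h01, h12, h20⟩ :=
      weyl_build_w 𝔫 K a b x haa hbb hab hba hax hbx' hxa' hxb'' hxx hxdef hxa hbxa
    exact weyl_build_equiv 𝔫 hfin w hli h01 h12 h20
  · -- reverse direction
    rintro ⟨e, he⟩
    have hfin : Module.finrank ℝ 𝔫 = 3 := by
      rw [e.finrank_eq]; simp
    have had : ∀ a : 𝔫, (LieAlgebra.ad ℝ 𝔫 a : 𝔫 →ₗ[ℝ] 𝔫)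
        = e.symm.toLinearMap ∘ₗ crossProduct (e a) ∘ₗ e.toLinearMap := by
      intro a; ext y
      simp only [LieAlgebra.ad_apply, coe_comp, Function.comp_apply,
        LinearEquiv.coe_coe]
      rw [← he, e.symm_apply_apply]
    have hK : ∀ a x : 𝔫, -killingForm ℝ 𝔫 a x
        = 2 * ((e a) 0 * (e x) 0 + (e a) 1 * (e x) 1 + (e a) 2 * (e x) 2) := by
      intro a x
      have h1 : (LieAlgebra.ad ℝ 𝔫 a : 𝔫 →ₗ[ℝ] 𝔫) ∘ₗ (LieAlgebra.ad ℝ 𝔫 x : 𝔫 →ₗ[ℝ] 𝔫)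
          = e.symm.conj (crossProduct (e a) ∘ₗ crossProduct (e x)) := by
        rw [had, had]
        ext y
        simp [LinearEquiv.conj_apply]
      rw [killingForm_apply_apply, h1, trace_conj', weyl_cross_trace]
      ring
    intro a b x
    apply e.injective
    rw [map_add, map_smul, map_smul, map_sub, map_smul, map_smul, map_zero, he, he,
      hK, hK, hfin]
    exact_mod_cast weyl_cross_key (e a) (e b) (e x)
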